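/- Let r ≥ 1 and let P be a q^r-divisible multiset of points of F_q^v of cardinality [r+1 choose 1]_q = (q^{r+1}−1)/(q−1). Then P is (with multiplicity 1) exactly the set of points of some (r+1)-dimensional subspace. -/

import Mathlib

open Module
open scoped Classical

section Aux

variable {K : Type*} [Field K] [Fintype K] {V : Type*} [AddCommGroup V] [Module K V]
  [FiniteDimensional K V]

lemma aux_card_ann [Fintype (Module.Dual K V)] (W : Submodule K V) :
    (Finset.univ.filter (fun φ : Module.Dual K V => W ≤ LinearMap.ker φ)).card
      = Fintype.card K ^ (finrank K V - finrank K W) := by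
  have h1 : ∀ φ : Module.Dual K V, (W ≤ LinearMap.ker φ) ↔ φ ∈ W.dualAnnihilator := by
    intro φ
    rw [Submodule.mem_dualAnnihilator]
    constructor
    · intro h w hw; exact h hw
    · intro h x hx; exact LinearMap.mem_ker.mpr (h x hx)
  have h2 : (Finset.univ.filter (fun φ : Module.Dual K V => W ≤ LinearMap.ker φ))
      = (Finset.univ.filter (fun φ : Module.Dual K V => φ ∈ W.dualAnnihilator)) := by
    apply Finset.filter_congr; intro φ _; simp [h1 φ]
  rw [h2, ← Fintype.card_subtype]
  have h3 : Fintype.card {φ : Module.Dual K V // φ ∈ W.dualAnnihilator}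
      = Fintype.card K ^ finrank K ↥W.dualAnnihilator :=
    card_eq_pow_finrank (K := K) (V := ↥W.dualAnnihilator)
  have h4 := LinearEquiv.finrank_eq (R := K) (M := V ⧸ W) (N := ↥W.dualAnnihilator)
    (Subspace.quotEquivAnnihilator W)
  have h5 := Submodule.finrank_quotient_add_finrank W
  have h6 : finrank K ↥W ≤ finrank K V := Submodule.finrank_le W
  have h7 : finrank K ↥W.dualAnnihilator = finrank K V - finrank K W := by omega
  rw [h3, h7]

lemma aux_swap {α β : Type*} (A : Finset α) (s : Multiset β) (p : β → α → Prop) :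
    (∑ φ ∈ A, Multiset.card (s.filter (fun b => p b φ)))
      = (s.map (fun b => (A.filter (fun φ => p b φ)).card)).sum := by
  induction s using Multiset.induction with
  | empty => simp
  | cons b s ih =>
    simp only [Multiset.filter_cons, Multiset.map_cons, Multiset.sum_cons, Multiset.card_add]
    rw [Finset.sum_add_distrib, ih]
    congr 1
    rw [Finset.card_filter]
    apply Finset.sum_congr rfl
    intro φ _
    by_cases h : p b φ <;> simp [h]

end Aux

theorem stmt_13 (K : Type*) [Field K] [Fintype K] (v r : ℕ) (hr : 1 ≤ r)
    (P : Multiset (Submodule K (Fin v → K)))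
    (hpts : ∀ Q ∈ P, finrank K ↥Q = 1)
    (hdiv : ∀ H : Submodule K (Fin v → K), finrank K ↥H = v - 1 →
      (Fintype.card K) ^ r ∣
        Multiset.card P - Multiset.card (P.filter (fun Q => Q ≤ H)))
    (hcard : Multiset.card P = (Fintype.card K ^ (r + 1) - 1) / (Fintype.card K - 1)) :
    ∃ U : Submodule K (Fin v → K), finrank K ↥U = r + 1 ∧
      ∀ Q : Submodule K (Fin v → K), finrank K ↥Q = 1 →
        P.count Q = if Q ≤ U then 1 else 0 := by
  classical
  set q := Fintype.card K with hqdef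
  have hq : 2 ≤ q := Fintype.one_lt_card
  set S : ℕ → ℕ := fun i => ∑ j ∈ Finset.range i, q ^ j with hSdef
  have hS : ∀ i, (q - 1) * S i = q ^ i - 1 := by
    intro i
    induction i with
    | zero => simp [hSdef]
    | succ i ih =>
      have h1 : 1 ≤ q ^ i := Nat.one_le_pow _ _ (by omega)
      have h2 : q ^ i ≤ q ^ i * q := Nat.le_mul_of_pos_right _ (by omega)
      have h3 : S (i + 1) = S i + q ^ i := by simp [hSdef, Finset.sum_range_succ]
      have h4 : q ^ (i + 1) = q ^ i * q := pow_succ q i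
      have h5 : (q - 1) * q ^ i = q ^ i * q - q ^ i := by
        rw [Nat.sub_mul, one_mul, mul_comm]
      rw [h3, Nat.mul_add, ih, h4, h5]
      omega
  have hSpos : ∀ i, 1 ≤ i → 0 < S i := by
    intro i hi
    apply Finset.sum_pos'
    · intro j _; exact Nat.zero_le _
    · exact ⟨0, Finset.mem_range.mpr (by omega), by positivity⟩
  -- rewrite cardinality
  have hn : Multiset.card P = S (r + 1) := by
    rw [hcard]
    exact (Nat.div_eq_of_eq_mul_left (show 0 < q - 1 by omega)
      (by rw [mul_comm]; exact (hS (r + 1)).symm))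
  have hcardP : Multiset.card P = S r + q ^ r := by
    rw [hn]; simp [hSdef, Finset.sum_range_succ]
  have hSr : S r < q ^ r := by
    have h1 := hS r
    have h2 : S r ≤ (q - 1) * S r := Nat.le_mul_of_pos_left _ (by omega)
    have h3 : 1 ≤ q ^ r := Nat.one_le_pow _ _ (by omega)
    omega
  -- the dual space
  haveI : Finite (Module.Dual K (Fin v → K)) :=
    Finite.of_injective (fun φ => (φ : (Fin v → K) → K)) DFunLike.coe_injective
  haveI : Fintype (Module.Dual K (Fin v → K)) := Fintype.ofFinite _
  have hV : finrank K (Fin v → K) = v := Module.finrank_fin_fun (R := K)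
  have hD : Fintype.card (Module.Dual K (Fin v → K)) = q ^ v := by
    rw [card_eq_pow_finrank (K := K) (V := Module.Dual K (Fin v → K)),
      Subspace.dual_finrank_eq, hV]
  have hcAnn : ∀ W : Submodule K (Fin v → K),
      (Finset.univ.filter (fun φ : Module.Dual K (Fin v → K) => W ≤ LinearMap.ker φ)).card
        = q ^ (v - finrank K ↥W) := by
    intro W; rw [aux_card_ann (K := K) W, hV]
  -- kernels of nonzero functionals are hyperplanes
  have hker : ∀ φ : Module.Dual K (Fin v → K), φ ≠ 0 →
      finrank K ↥(LinearMap.ker φ) = v - 1 := by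
    intro φ hφ
    have h1 := LinearMap.finrank_range_add_finrank_ker φ
    have h2 : LinearMap.range φ = ⊤ := by
      obtain ⟨x, hx⟩ : ∃ x, φ x ≠ 0 := by
        by_contra h
        push_neg at h
        exact hφ (LinearMap.ext fun x => by simp [h x])
      rw [eq_top_iff]
      intro y _
      refine ⟨(y * (φ x)⁻¹) • x, ?_⟩
      simp [mul_assoc, inv_mul_cancel₀ hx]
    rw [h2, finrank_top, finrank_self] at h1
    omega
  -- the candidate subspace
  set U₀ : Submodule K (Fin v → K) := P.sup with hU₀
  have hUle : ∀ Q ∈ P, Q ≤ U₀ := fun Q hQ => Multiset.le_sup hQ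
  set k := finrank K ↥U₀ with hk
  have hk1 : 1 ≤ k := by
    have hpos : 0 < Multiset.card P := by
      have := Nat.one_le_pow r q (by omega); omega
    obtain ⟨Q, hQ⟩ := Multiset.exists_mem_of_ne_zero (Multiset.card_pos.mp hpos)
    have h := Submodule.finrank_mono (hUle Q hQ)
    rw [hpts Q hQ] at h
    exact h
  have hkv : k ≤ v := by
    have := Submodule.finrank_le U₀
    omega
  -- constancy of hyperplane multiplicities
  have hconst : ∀ φ : Module.Dual K (Fin v → K), ¬ U₀ ≤ LinearMap.ker φ →
      Multiset.card (P.filter (fun Q => Q ≤ LinearMap.ker φ)) = S r := by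
    intro φ hφ
    have hφ0 : φ ≠ 0 := by
      rintro rfl
      exact hφ (fun x _ => by simp)
    have hdvd := hdiv (LinearMap.ker φ) (hker φ hφ0)
    set m := Multiset.card (P.filter (fun Q => Q ≤ LinearMap.ker φ)) with hm
    have hmle : m ≤ Multiset.card P := Multiset.card_le_card (Multiset.filter_le _ _)
    have hmne : m ≠ Multiset.card P := by
      intro he
      have heq : P.filter (fun Q => Q ≤ LinearMap.ker φ) = P :=
        Multiset.eq_of_le_of_card_le (Multiset.filter_le _ _) (by omega)
      apply hφ
      rw [hU₀, Multiset.sup_le]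
      intro Q hQ
      rw [← heq] at hQ
      exact (Multiset.mem_filter.mp hQ).2
    obtain ⟨c, hc⟩ := hdvd
    rcases c with _ | _ | c
    · omega
    · omega
    · exfalso
      have h2 : q ^ r * 2 ≤ q ^ r * (c + 1 + 1) := Nat.mul_le_mul_left _ (by omega)
      rw [← hc] at h2
      omega
  -- first double count: determine k = r + 1
  set A : Finset (Module.Dual K (Fin v → K)) :=
    Finset.univ.filter (fun φ => ¬ U₀ ≤ LinearMap.ker φ) with hA
  have hAcard : A.card = q ^ v - q ^ (v - k) := by
    have h1 := Finset.card_filter_add_card_filter_not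
      (s := Finset.univ) (p := fun φ : Module.Dual K (Fin v → K) => U₀ ≤ LinearMap.ker φ)
    have h2 := hcAnn U₀
    rw [← hk] at h2
    have h3 : A = Finset.univ \ Finset.univ.filter
        (fun φ : Module.Dual K (Fin v → K) => U₀ ≤ LinearMap.ker φ) :=
      Finset.filter_not _ _
    rw [h3, Finset.card_sdiff_of_subset (Finset.filter_subset _ _), Finset.card_univ, hD, h2]
  have hsum1 : ∑ φ ∈ A, Multiset.card (P.filter (fun Q => Q ≤ LinearMap.ker φ))
      = (q ^ v - q ^ (v - k)) * S r := by
    rw [Finset.sum_congr rfl (fun φ hφ => hconst φ (by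
      simp only [hA, Finset.mem_filter] at hφ; exact hφ.2))]
    rw [Finset.sum_const, smul_eq_mul, hAcard]
  have hsum2 : ∑ φ ∈ A, Multiset.card (P.filter (fun Q => Q ≤ LinearMap.ker φ))
      = Multiset.card P * (q ^ (v - 1) - q ^ (v - k)) := by
    rw [aux_swap]
    have hmap : P.map (fun Q => (A.filter (fun φ => Q ≤ LinearMap.ker φ)).card)
        = P.map (fun _ => q ^ (v - 1) - q ^ (v - k)) := by
      apply Multiset.map_congr rfl
      intro Q hQ
      have hQU : Q ≤ U₀ := hUle Q hQ
      have hsub : (Finset.univ.filter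
            (fun φ : Module.Dual K (Fin v → K) => U₀ ≤ LinearMap.ker φ))
          ⊆ Finset.univ.filter (fun φ => Q ≤ LinearMap.ker φ) := by
        intro φ hφ
        simp only [Finset.mem_filter] at hφ ⊢
        exact ⟨hφ.1, le_trans hQU hφ.2⟩
      have heq : A.filter (fun φ => Q ≤ LinearMap.ker φ)
          = (Finset.univ.filter (fun φ => Q ≤ LinearMap.ker φ)) \
            (Finset.univ.filter (fun φ => U₀ ≤ LinearMap.ker φ)) := by
        ext φ
        simp only [hA, Finset.mem_filter, Finset.mem_sdiff, Finset.mem_univ, true_and]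
        tauto
      rw [heq, Finset.card_sdiff_of_subset hsub, hcAnn Q, hcAnn U₀, hpts Q hQ, ← hk]
    rw [hmap, Multiset.map_const', Multiset.sum_replicate, smul_eq_mul]
  have eq1 : (q ^ v - q ^ (v - k)) * S r
      = Multiset.card P * (q ^ (v - 1) - q ^ (v - k)) := by rw [← hsum1, hsum2]
  -- integer versions of the geometric sum identities
  have hsz : ((q : ℤ) - 1) * S r = (q : ℤ) ^ r - 1 := by
    have h := hS r
    zify [show 1 ≤ q ^ r from Nat.one_le_pow _ _ (by omega), show 1 ≤ q by omega] at h
    exact h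
  have hnz : ((q : ℤ) - 1) * Multiset.card P = (q : ℤ) ^ (r + 1) - 1 := by
    have h := hS (r + 1)
    rw [← hn] at h
    zify [show 1 ≤ q ^ (r + 1) from Nat.one_le_pow _ _ (by omega), show 1 ≤ q by omega] at h
    exact h
  have hkr : k = r + 1 := by
    obtain ⟨e, he⟩ : ∃ e, v = e + k := ⟨v - k, by omega⟩
    obtain ⟨j, hj⟩ : ∃ j, k = j + 1 := ⟨k - 1, by omega⟩
    have e1 : ((q : ℤ) ^ (e + j + 1) - q ^ e) * S r
        = (Multiset.card P : ℤ) * ((q : ℤ) ^ (e + j) - q ^ e) := by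
      have hle1 : q ^ e ≤ q ^ (e + j + 1) := Nat.pow_le_pow_right (by omega) (by omega)
      have hle2 : q ^ e ≤ q ^ (e + j) := Nat.pow_le_pow_right (by omega) (by omega)
      have h := eq1
      rw [show q ^ v = q ^ (e + j + 1) from by rw [show v = e + j + 1 by omega],
        show q ^ (v - 1) = q ^ (e + j) from by rw [show v - 1 = e + j by omega],
        show q ^ (v - k) = q ^ e from by rw [show v - k = e by omega]] at h
      zify [hle1, hle2] at h
      exact h
    have key : (q : ℤ) ^ e * (((q : ℤ) - 1) * ((q : ℤ) ^ r - (q : ℤ) ^ j)) = 0 := by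
      linear_combination ((q : ℤ) - 1) * e1
        - ((q : ℤ) ^ (e + j + 1) - (q : ℤ) ^ e) * hsz
        + ((q : ℤ) ^ (e + j) - (q : ℤ) ^ e) * hnz
    have hq0 : (q : ℤ) ^ e ≠ 0 := by positivity
    have hq1 : ((q : ℤ) - 1) ≠ 0 := by
      have : (2 : ℤ) ≤ (q : ℤ) := by exact_mod_cast hq
      omega
    have hrj : (q : ℤ) ^ r = (q : ℤ) ^ j := by
      rcases mul_eq_zero.mp key with h | h
      · exact absurd h hq0
      rcases mul_eq_zero.mp h with h | h
      · exact absurd h hq1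
      · omega
    have hrj' : q ^ r = q ^ j := by exact_mod_cast hrj
    have := Nat.pow_right_injective hq hrj'
    omega
  -- second double count: multiplicities in U₀
  have hcount : ∀ Q₀ : Submodule K (Fin v → K), finrank K ↥Q₀ = 1 → Q₀ ≤ U₀ →
      P.count Q₀ = 1 := by
    intro Q₀ hQ₀r hQ₀le
    set B : Finset (Module.Dual K (Fin v → K)) :=
      (Finset.univ.filter (fun φ => Q₀ ≤ LinearMap.ker φ)) \
      (Finset.univ.filter (fun φ => U₀ ≤ LinearMap.ker φ)) with hB
    have hsubB : (Finset.univ.filter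
          (fun φ : Module.Dual K (Fin v → K) => U₀ ≤ LinearMap.ker φ))
        ⊆ Finset.univ.filter (fun φ => Q₀ ≤ LinearMap.ker φ) := by
      intro φ hφ
      simp only [Finset.mem_filter] at hφ ⊢
      exact ⟨hφ.1, le_trans hQ₀le hφ.2⟩
    have hBcard : B.card = q ^ (v - 1) - q ^ (v - k) := by
      rw [hB, Finset.card_sdiff_of_subset hsubB, hcAnn Q₀, hcAnn U₀, hQ₀r, ← hk]
    have hBmem : ∀ φ ∈ B, Q₀ ≤ LinearMap.ker φ ∧ ¬ U₀ ≤ LinearMap.ker φ := by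
      intro φ hφ
      simp only [hB, Finset.mem_sdiff, Finset.mem_filter, Finset.mem_univ, true_and] at hφ
      exact hφ
    have hBsum1 : ∑ φ ∈ B, Multiset.card (P.filter (fun Q => Q ≤ LinearMap.ker φ))
        = (q ^ (v - 1) - q ^ (v - k)) * S r := by
      rw [Finset.sum_congr rfl (fun φ hφ => hconst φ (hBmem φ hφ).2)]
      rw [Finset.sum_const, smul_eq_mul, hBcard]
    have hsup2 : ∀ Q : Submodule K (Fin v → K), finrank K ↥Q = 1 → Q ≠ Q₀ →
        finrank K ↥(Q₀ ⊔ Q) = 2 := by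
      intro Q h1 hne
      have hfle : finrank K ↥(Q₀ ⊓ Q) ≤ 1 := by
        have h := Submodule.finrank_mono (inf_le_left : Q₀ ⊓ Q ≤ Q₀)
        rw [hQ₀r] at h
        exact h
      have hinf0 : finrank K ↥(Q₀ ⊓ Q) = 0 := by
        by_contra h0
        have h1' : finrank K ↥(Q₀ ⊓ Q) = 1 := by omega
        have e1 : Q₀ ⊓ Q = Q₀ :=
          Submodule.eq_of_le_of_finrank_eq inf_le_left (by rw [h1', hQ₀r])
        have e2 : Q₀ ≤ Q := by rw [← e1]; exact inf_le_right
        exact hne (Submodule.eq_of_le_of_finrank_eq e2 (by rw [hQ₀r, h1])).symm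
      have h := Submodule.finrank_sup_add_finrank_inf_eq Q₀ Q
      rw [hQ₀r, h1, hinf0] at h
      omega
    set m := P.count Q₀ with hmdef
    have hmle : m ≤ Multiset.card P := Multiset.count_le_card _ _
    have hcard1 : Multiset.card (P.filter (fun Q => Q = Q₀)) = m := by
      rw [hmdef, Multiset.count_eq_card_filter_eq]
      congr 1
      apply Multiset.filter_congr
      intro x _
      constructor
      · intro h; exact h.symm
      · intro h; exact h.symm
    have hcard2 : Multiset.card (P.filter (fun Q => ¬ Q = Q₀))
        = Multiset.card P - m := by
      have h := Multiset.filter_add_not (fun Q => Q = Q₀) P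
      have h' := congrArg Multiset.card h
      rw [Multiset.card_add, hcard1] at h'
      omega
    have hBsum2 : ∑ φ ∈ B, Multiset.card (P.filter (fun Q => Q ≤ LinearMap.ker φ))
        = m * (q ^ (v - 1) - q ^ (v - k))
          + (Multiset.card P - m) * (q ^ (v - 2) - q ^ (v - k)) := by
      rw [aux_swap]
      have hPsplit : P.map (fun Q => (B.filter (fun φ => Q ≤ LinearMap.ker φ)).card)
          = (P.filter (fun Q => Q = Q₀)).map
              (fun Q => (B.filter (fun φ => Q ≤ LinearMap.ker φ)).card)
            + (P.filter (fun Q => ¬ Q = Q₀)).map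
              (fun Q => (B.filter (fun φ => Q ≤ LinearMap.ker φ)).card) := by
        rw [← Multiset.map_add, Multiset.filter_add_not]
      rw [hPsplit, Multiset.sum_add]
      congr 1
      · -- part with Q = Q₀
        have hc : ∀ x ∈ P.filter (fun Q => Q = Q₀),
            (B.filter (fun φ => x ≤ LinearMap.ker φ)).card
              = q ^ (v - 1) - q ^ (v - k) := by
          intro x hx
          have hx' : x = Q₀ := (Multiset.mem_filter.mp hx).2
          subst hx'
          rw [Finset.filter_true_of_mem (fun φ hφ => (hBmem φ hφ).1), hBcard]
        rw [Multiset.map_congr rfl hc, Multiset.map_const', Multiset.sum_replicate,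
          smul_eq_mul, hcard1]
      · -- part with Q ≠ Q₀
        have hc : ∀ x ∈ P.filter (fun Q => ¬ Q = Q₀),
            (B.filter (fun φ => x ≤ LinearMap.ker φ)).card
              = q ^ (v - 2) - q ^ (v - k) := by
          intro x hx
          have hxP : x ∈ P := Multiset.mem_of_mem_filter hx
          have hxne : x ≠ Q₀ := (Multiset.mem_filter.mp hx).2
          have hxU : x ≤ U₀ := hUle x hxP
          have hsub2 : (Finset.univ.filter
                (fun φ : Module.Dual K (Fin v → K) => U₀ ≤ LinearMap.ker φ))
              ⊆ Finset.univ.filter (fun φ => Q₀ ⊔ x ≤ LinearMap.ker φ) := by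
            intro φ hφ
            simp only [Finset.mem_filter] at hφ ⊢
            exact ⟨hφ.1, le_trans (sup_le hQ₀le hxU) hφ.2⟩
          have heq : B.filter (fun φ => x ≤ LinearMap.ker φ)
              = (Finset.univ.filter (fun φ => Q₀ ⊔ x ≤ LinearMap.ker φ)) \
                (Finset.univ.filter (fun φ => U₀ ≤ LinearMap.ker φ)) := by
            ext φ
            simp only [hB, Finset.mem_filter, Finset.mem_sdiff, Finset.mem_univ,
              true_and, sup_le_iff]
            tauto
          rw [heq, Finset.card_sdiff_of_subset hsub2, hcAnn (Q₀ ⊔ x), hcAnn U₀, ← hk,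
            hsup2 x (hpts x hxP) hxne]
        rw [Multiset.map_congr rfl hc, Multiset.map_const', Multiset.sum_replicate,
          smul_eq_mul, hcard2]
    have eq2 : (q ^ (v - 1) - q ^ (v - k)) * S r
        = m * (q ^ (v - 1) - q ^ (v - k))
          + (Multiset.card P - m) * (q ^ (v - 2) - q ^ (v - k)) := by
      rw [← hBsum1, hBsum2]
    obtain ⟨t, ht⟩ : ∃ t, r = t + 1 := ⟨r - 1, by omega⟩
    obtain ⟨e, he⟩ : ∃ e, v = e + t + 2 := ⟨v - (t + 2), by omega⟩
    have e2 : ((q : ℤ) ^ (e + t + 1) - q ^ e) * S r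
        = (m : ℤ) * ((q : ℤ) ^ (e + t + 1) - q ^ e)
          + ((Multiset.card P : ℤ) - m) * ((q : ℤ) ^ (e + t) - q ^ e) := by
      have hle1 : q ^ e ≤ q ^ (e + t + 1) := Nat.pow_le_pow_right (by omega) (by omega)
      have hle2 : q ^ e ≤ q ^ (e + t) := Nat.pow_le_pow_right (by omega) (by omega)
      have h := eq2
      rw [show q ^ (v - 1) = q ^ (e + t + 1) from by rw [show v - 1 = e + t + 1 by omega],
        show q ^ (v - 2) = q ^ (e + t) from by rw [show v - 2 = e + t by omega],
        show q ^ (v - k) = q ^ e from by rw [show v - k = e by omega]] at h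
      zify [hle1, hle2, hmle] at h
      exact h
    have hsz' : ((q : ℤ) - 1) * S r = (q : ℤ) ^ (t + 1) - 1 := by rw [← ht]; exact hsz
    have hnz' : ((q : ℤ) - 1) * Multiset.card P = (q : ℤ) ^ (t + 2) - 1 := by
      rw [show t + 2 = r + 1 by omega]; exact hnz
    have key2 : ((m : ℤ) - 1) * ((q : ℤ) ^ e * (q : ℤ) ^ t * ((q : ℤ) - 1) ^ 2) = 0 := by
      linear_combination (-(q : ℤ) + 1) * e2
        + ((q : ℤ) ^ (e + t + 1) - (q : ℤ) ^ e) * hsz'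
        - ((q : ℤ) ^ (e + t) - (q : ℤ) ^ e) * hnz'
    have hpos : ((q : ℤ) ^ e * (q : ℤ) ^ t * ((q : ℤ) - 1) ^ 2) ≠ 0 := by
      have h2 : (2 : ℤ) ≤ (q : ℤ) := by exact_mod_cast hq
      have : (0 : ℤ) < (q : ℤ) ^ e * (q : ℤ) ^ t * ((q : ℤ) - 1) ^ 2 :=
        mul_pos (mul_pos (pow_pos (by omega) _) (pow_pos (by omega) _))
          (pow_pos (by omega) _)
      omega
    have hm1 : (m : ℤ) - 1 = 0 := by
      rcases mul_eq_zero.mp key2 with h | h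
      · exact h
      · exact absurd h hpos
    omega
  refine ⟨U₀, ?_, ?_⟩
  · rw [← hk, hkr]
  · intro Q hQr
    by_cases hle : Q ≤ U₀
    · rw [if_pos hle]
      exact hcount Q hQr hle
    · rw [if_neg hle, Multiset.count_eq_zero]
      intro hQP
      exact hle (hUle Q hQP)
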